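/- Let V : ((Fin N) → ℝ³) → ℝ be twice continuously differentiable and invariant under the diagonal action of SO(3). Let r be a stationary point of V (∇V(r) = 0). Then for every skew-symmetric 3×3 real matrix X, the infinitesimal rotation vector v defined by v i = X (r i) lies in the kernel of the Hessian: H(r) v = 0. -/

import Mathlib

/-- The configuration space `(ℝ³)^N` with its standard Euclidean inner product. -/
noncomputable abbrev Conf (N : ℕ) : Type :=
  PiLp 2 (fun _ : Fin N => EuclideanSpace ℝ (Fin 3))

/-- The diagonal action of a `3 × 3` matrix `A` on configurations:
`(g·r) i = A (r i)`. -/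
noncomputable def rotAct (N : ℕ) (A : Matrix (Fin 3) (Fin 3) ℝ) (r : Conf N) : Conf N :=
  WithLp.toLp 2 (fun i => Matrix.toEuclideanLin A (r i))

instance confContinuousSMul (N : ℕ) : ContinuousSMul ℝ (Conf N) := inferInstance

open NormedSpace
open scoped Matrix

attribute [local instance] Matrix.linftyOpNormedRing Matrix.linftyOpNormedAlgebra

/-- `rotAct` as a continuous linear map. -/
noncomputable def rotCLM (N : ℕ) (A : Matrix (Fin 3) (Fin 3) ℝ) : Conf N →L[ℝ] Conf N :=
  { toFun := rotAct N A
    map_add' := by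
      intro x y; ext i
      simp [rotAct]
    map_smul' := by
      intro c x; ext i
      simp [rotAct]
    cont := by unfold rotAct; fun_prop }

lemma rotCLM_apply (N : ℕ) (A : Matrix (Fin 3) (Fin 3) ℝ) (r : Conf N) :
    rotCLM N A r = rotAct N A r := rfl

lemma rotAct_rotAct (N : ℕ) (A B : Matrix (Fin 3) (Fin 3) ℝ) (r : Conf N) :
    rotAct N A (rotAct N B r) = rotAct N (A * B) r := by
  ext i
  simp [rotAct, Matrix.toEuclideanLin_apply, Matrix.mulVec_mulVec]

lemma rotAct_one (N : ℕ) (r : Conf N) : rotAct N 1 r = r := by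
  ext i j
  simp [rotAct, Matrix.toEuclideanLin_apply, Matrix.one_mulVec]

/-- If `V` is invariant and has vanishing gradient at `r`, the gradient also vanishes
along the orbit. -/
lemma grad_zero_of_rot (N : ℕ) (V : Conf N → ℝ) (hV : ContDiff ℝ 2 V)
    (hinv : ∀ A : Matrix (Fin 3) (Fin 3) ℝ, A ∈ Matrix.orthogonalGroup (Fin 3) ℝ →
      A.det = 1 → ∀ r : Conf N, V (rotAct N A r) = V r)
    (A : Matrix (Fin 3) (Fin 3) ℝ) (hA : A ∈ Matrix.orthogonalGroup (Fin 3) ℝ)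
    (hdet : A.det = 1) (r : Conf N) (h : gradient V r = 0) :
    gradient V (rotAct N A r) = 0 := by
  have hdV : Differentiable ℝ V := hV.differentiable (by norm_num)
  set L := rotCLM N A with hL
  have hcomp : HasFDerivAt (V ∘ L) ((fderiv ℝ V (L r)).comp L) r :=
    (hdV (L r)).hasFDerivAt.comp r L.hasFDerivAt
  have hVL : V ∘ ⇑L = V := funext fun x => hinv A hA hdet x
  rw [hVL] at hcomp
  have hfr : fderiv ℝ V r = 0 := by
    have := h
    rw [gradient] at this
    simpa using (LinearIsometryEquiv.map_eq_zero_iff _).mp this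
  have hzero : (fderiv ℝ V (L r)).comp L = 0 := by
    rw [← hcomp.fderiv, hfr]
  have hAAt : A * Aᵀ = 1 := by
    have h' := hA
    rw [Matrix.mem_orthogonalGroup_iff] at h'
    exact h'
  have hfd : fderiv ℝ V (L r) = 0 := by
    ext w
    have hw : L (rotAct N Aᵀ w) = w := by
      rw [rotCLM_apply, rotAct_rotAct, hAAt, rotAct_one]
    have := ContinuousLinearMap.ext_iff.mp hzero (rotAct N Aᵀ w)
    simpa [hw] using this
  rw [show rotAct N A r = L r from rfl, gradient, hfd]
  simp

/-- The infinitesimal-rotation map `M ↦ (i ↦ M (r i))` as a continuous linear map. -/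
noncomputable def infRot (N : ℕ) (r : Conf N) : Matrix (Fin 3) (Fin 3) ℝ →L[ℝ] Conf N :=
  { toFun := fun M => WithLp.toLp 2 (fun i => Matrix.toEuclideanLin M (r i))
    map_add' := by
      intro M M'; ext i
      simp
    map_smul' := by
      intro c M; ext i
      simp
    cont := by
      simp only [Matrix.toEuclideanLin_apply]
      fun_prop }

lemma infRot_apply (N : ℕ) (r : Conf N) (M : Matrix (Fin 3) (Fin 3) ℝ) :
    infRot N r M = rotAct N M r := rfl

/-- if `V` is C² and invariant under the diagonal `SO(3)`-action and `r` is a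
stationary point of `V`, then for every skew-symmetric `3 × 3` matrix `X`, the infinitesimal
rotation vector `v i = X (r i)` lies in the kernel of the Hessian `H(r)` (the derivative of
the gradient vector field). -/
theorem hessian_kills_infinitesimal_rotations (N : ℕ) (V : Conf N → ℝ)
    (hV : ContDiff ℝ 2 V)
    (hinv : ∀ A : Matrix (Fin 3) (Fin 3) ℝ, A ∈ Matrix.orthogonalGroup (Fin 3) ℝ →
      A.det = 1 → ∀ r : Conf N, V (rotAct N A r) = V r)
    (H : Conf N → Conf N →L[ℝ] Conf N)
    (hH : ∀ x : Conf N, HasFDerivAt (gradient V) (H x) x)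
    (r : Conf N) (hstat : gradient V r = 0)
    (X : Matrix (Fin 3) (Fin 3) ℝ) (hX : X.transpose = -X) :
    H r (WithLp.toLp 2 (fun i => Matrix.toEuclideanLin X (r i))) = 0 := by
  -- the one-parameter group of rotations
  have hskew : ∀ t : ℝ, (t • X)ᵀ = -(t • X) := fun t => by
    rw [Matrix.transpose_smul, hX, smul_neg]
  have hmem : ∀ t : ℝ, exp (t • X) ∈ Matrix.orthogonalGroup (Fin 3) ℝ := by
    intro t
    rw [Matrix.mem_orthogonalGroup_iff]
    have hst : star (exp (t • X)) = exp (-(t • X)) := by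
      rw [Matrix.star_eq_conjTranspose, Matrix.conjTranspose_eq_transpose_of_trivial,
        ← Matrix.exp_transpose, hskew]
    rw [← Matrix.exp_transpose, hskew, ← Matrix.exp_add_of_commute _ _ ((Commute.refl (t • X)).neg_right), add_neg_cancel, exp_zero]
  have hcont : Continuous fun t : ℝ => (exp (t • X)).det := by
    have h1 : Continuous fun t : ℝ => exp (t • X) :=
      exp_continuous.comp (continuous_id.smul continuous_const)
    exact h1.matrix_det
  have hne : ∀ t : ℝ, (exp (t • X)).det ≠ 0 := by
    intro t
    exact ((Matrix.isUnit_iff_isUnit_det _).mp (Matrix.isUnit_exp (t • X))).ne_zero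
  have hpos : ∀ t : ℝ, 0 < (exp (t • X)).det := by
    intro t
    by_contra hle
    push_neg at hle
    have h0 : (exp ((0 : ℝ) • X)).det = 1 := by
      rw [zero_smul, exp_zero, Matrix.det_one]
    have hmemIcc : (0 : ℝ) ∈ Set.uIcc ((exp (t • X)).det) ((exp ((0:ℝ) • X)).det) := by
      rw [h0]
      exact Set.mem_uIcc.mpr (Or.inl ⟨hle, zero_le_one⟩)
    obtain ⟨s, -, hs⟩ := intermediate_value_uIcc (a := t) (b := 0)
      (hcont.continuousOn) hmemIcc
    exact hne s hs
  have hdet1 : ∀ t : ℝ, (exp (t • X)).det = 1 := by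
    intro t
    have hAAt : exp (t • X) * (exp (t • X))ᵀ = 1 := by
      have h' := hmem t
      rw [Matrix.mem_orthogonalGroup_iff] at h'
      exact h'
    have hsq : (exp (t • X)).det * (exp (t • X)).det = 1 := by
      have := congrArg Matrix.det hAAt
      rwa [Matrix.det_mul, Matrix.det_transpose, Matrix.det_one] at this
    rcases mul_self_eq_one_iff.mp hsq with h | h
    · exact h
    · exact absurd h (by linarith [hpos t])
  -- gradient vanishes along the orbit
  have hg : ∀ t : ℝ, gradient V (rotAct N (exp (t • X)) r) = 0 := fun t =>
    grad_zero_of_rot N V hV hinv _ (hmem t) (hdet1 t) r hstat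
  -- the curve and its derivative
  have hexp : HasDerivAt (fun t : ℝ => exp (t • X)) X 0 := by
    have := hasDerivAt_exp_smul_const (𝕂 := ℝ) X (0 : ℝ)
    simp only [zero_smul, exp_zero, one_mul] at this
    exact this
  have hc : HasDerivAt (fun t : ℝ => (infRot N r) (exp (t • X))) (infRot N r X) 0 :=
    (infRot N r).hasFDerivAt.comp_hasDerivAt 0 hexp
  have hc0 : (infRot N r) (1 : Matrix (Fin 3) (Fin 3) ℝ) = r := by
    rw [infRot_apply, rotAct_one]
  have hH' : HasFDerivAt (gradient V) (H r) ((fun t : ℝ => (infRot N r) (exp (t • X))) 0) := by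
    simpa [zero_smul, exp_zero, hc0] using hH r
  have hchain : HasDerivAt (fun t : ℝ => gradient V ((infRot N r) (exp (t • X))))
      (H r (infRot N r X)) 0 := hH'.comp_hasDerivAt (f := fun t : ℝ => (infRot N r) (exp (t • X))) 0 hc
  have hconst : (fun t : ℝ => gradient V ((infRot N r) (exp (t • X)))) =
      fun _ => (0 : Conf N) := by
    funext t
    rw [infRot_apply]
    exact hg t
  rw [hconst] at hchain
  have : H r (infRot N r X) = 0 := hchain.unique (hasDerivAt_const 0 0)
  exact this
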